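/- Fix T > 0, m > 0, c > 0 and c′ ≥ 0, and let h : [0, T) → ℝ be continuous with c/(T−t) ≤ h_t ≤ c/(T−t) + c′ for all t ∈ [0, T). Define w_t = (h_t/h_0)^m · exp(−(m/(m+1)) ∫₀ᵗ h_s ds). Then there exist constants K₁, K₂ > 0 such that K₁ · (T−t)^((m/(m+1))(c−(m+1))) ≤ w_t ≤ K₂ · (T−t)^((m/(m+1))(c−(m+1))) for all t ∈ [0, T). -/

import Mathlib

open Real MeasureTheory Set Filter intervalIntegral

lemma aux_int (T t c : ℝ) (h0t : 0 ≤ t) (htT : t < T) :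
    ∫ s in (0:ℝ)..t, c / (T - s) = c * (Real.log T - Real.log (T - t)) := by
  have hder : ∀ s ∈ uIcc (0:ℝ) t,
      HasDerivAt (fun s => -(c * Real.log (T - s))) (c / (T - s)) s := by
    intro s hs
    rw [uIcc_of_le h0t] at hs
    have hpos : 0 < T - s := by cases hs; linarith
    have h1 : HasDerivAt (fun s : ℝ => T - s) (-1) s := (hasDerivAt_id s).const_sub T
    have h2 := (Real.hasDerivAt_log hpos.ne').comp s h1
    have h3 := (h2.const_mul c).neg
    have e : c / (T - s) = -(c * ((T - s)⁻¹ * -1)) := by ring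
    rw [e]; exact h3
  have hintg : IntervalIntegrable (fun s => c / (T - s)) volume 0 t := by
    apply ContinuousOn.intervalIntegrable
    apply continuousOn_const.div (continuousOn_const.sub continuousOn_id)
    intro s hs
    rw [uIcc_of_le h0t] at hs
    have : 0 < T - s := by cases hs; linarith
    exact this.ne'
  rw [intervalIntegral.integral_eq_sub_of_hasDerivAt hder hintg]
  ring

lemma aux_intg (T t c : ℝ) (h0t : 0 ≤ t) (htT : t < T) :
    IntervalIntegrable (fun s => c / (T - s)) volume 0 t := by
  apply ContinuousOn.intervalIntegrable
  apply continuousOn_const.div (continuousOn_const.sub continuousOn_id)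
  intro s hs
  rw [uIcc_of_le h0t] at hs
  have : 0 < T - s := by cases hs; linarith
  exact this.ne'

/-- For a continuous reversion rate `h` on `[0,T)` with the two-sided blow-up bound
`c/(T−t) ≤ h_t ≤ c/(T−t) + c′`, the weight
`w_t = (h_t/h_0)^m·exp(−(m/(m+1))∫₀ᵗ h_s ds)` satisfies the two-sided power-law bound
`K₁(T−t)^((m/(m+1))(c−(m+1))) ≤ w_t ≤ K₂(T−t)^((m/(m+1))(c−(m+1)))` on `[0,T)` for some
constants `K₁, K₂ > 0`. -/
theorem stmt_16 (T m c c' : ℝ) (hT : 0 < T) (hm : 0 < m) (hc : 0 < c) (hc' : 0 ≤ c')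
    (h : ℝ → ℝ) (hcont : ContinuousOn h (Ico 0 T))
    (hbound : ∀ t ∈ Ico (0 : ℝ) T, c / (T - t) ≤ h t ∧ h t ≤ c / (T - t) + c')
    (w : ℝ → ℝ)
    (hw : ∀ t : ℝ, w t =
      (h t / h 0) ^ m * Real.exp (-(m / (m + 1)) * ∫ s in (0 : ℝ)..t, h s)) :
    ∃ K₁ K₂ : ℝ, 0 < K₁ ∧ 0 < K₂ ∧
      ∀ t ∈ Ico (0 : ℝ) T,
        K₁ * (T - t) ^ ((m / (m + 1)) * (c - (m + 1))) ≤ w t ∧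
        w t ≤ K₂ * (T - t) ^ ((m / (m + 1)) * (c - (m + 1))) := by
  set β := m / (m + 1) with hβ
  have hm1 : (0:ℝ) < m + 1 := by linarith
  have hβpos : 0 < β := div_pos hm hm1
  have hβm : β * (m + 1) = m := by rw [hβ, div_mul_cancel₀ _ hm1.ne']
  have hA : 0 < h 0 := by
    have := (hbound 0 ⟨le_refl 0, hT⟩).1
    have h2 : 0 < c / (T - 0) := div_pos hc (by simpa using hT)
    linarith
  refine ⟨(c / h 0) ^ m * Real.exp (-(β * c' * T)) * T ^ (-(β * c)),
    ((c + c' * T) / h 0) ^ m * T ^ (-(β * c)), ?_, ?_, ?_⟩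
  · have := Real.rpow_pos_of_pos (div_pos hc hA) m
    have := Real.rpow_pos_of_pos hT (-(β * c))
    positivity
  · have := Real.rpow_pos_of_pos (div_pos (by nlinarith) hA) m
    have := Real.rpow_pos_of_pos hT (-(β * c))
    positivity
  intro t ht
  obtain ⟨ht0, htT⟩ := ht
  have hTt : 0 < T - t := by linarith
  have hsub : Icc (0:ℝ) t ⊆ Ico 0 T := fun s hs => ⟨hs.1, lt_of_le_of_lt hs.2 htT⟩
  have hint : IntervalIntegrable h volume 0 t :=
    (hcont.mono (by rw [uIcc_of_le ht0]; exact hsub)).intervalIntegrable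
  have hintlow := aux_intg T t c ht0 htT
  set I := ∫ s in (0:ℝ)..t, h s with hI
  have Ilow : c * (Real.log T - Real.log (T - t)) ≤ I := by
    rw [hI, ← aux_int T t c ht0 htT]
    exact intervalIntegral.integral_mono_on ht0 hintlow hint
      (fun s hs => (hbound s (hsub hs)).1)
  have Ihigh : I ≤ c * (Real.log T - Real.log (T - t)) + c' * t := by
    have h1 : I ≤ ∫ s in (0:ℝ)..t, (c / (T - s) + c') :=
      intervalIntegral.integral_mono_on ht0 hint (hintlow.add intervalIntegrable_const)
        (fun s hs => (hbound s (hsub hs)).2)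
    rwa [intervalIntegral.integral_add hintlow intervalIntegrable_const,
      aux_int T t c ht0 htT, intervalIntegral.integral_const, smul_eq_mul, sub_zero,
      mul_comm t c'] at h1
  set Q := (T - t) ^ (β * c) with hQdef
  set R := T ^ (-(β * c)) with hRdef
  set P := (T - t) ^ (-m) with hPdef
  have hQ : Q = Real.exp (Real.log (T - t) * (β * c)) := Real.rpow_def_of_pos hTt _
  have hR : R = Real.exp (Real.log T * (-(β * c))) := Real.rpow_def_of_pos hT _
  have hQpos : 0 < Q := Real.rpow_pos_of_pos hTt _
  have hRpos : 0 < R := Real.rpow_pos_of_pos hT _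
  have hPpos : 0 < P := Real.rpow_pos_of_pos hTt _
  -- exponential bounds
  have e1 : Real.exp (-β * I) ≤ Q * R := by
    rw [hQ, hR, ← Real.exp_add, Real.exp_le_exp]
    nlinarith [mul_le_mul_of_nonneg_left Ilow hβpos.le]
  have e2 : Real.exp (-(β * c' * T)) * (Q * R) ≤ Real.exp (-β * I) := by
    rw [hQ, hR, ← Real.exp_add, ← Real.exp_add, Real.exp_le_exp]
    have h1 := mul_le_mul_of_nonneg_left Ihigh hβpos.le
    have h2 : β * c' * t ≤ β * c' * T := by
      apply mul_le_mul_of_nonneg_left (by linarith : t ≤ T) (by positivity)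
    nlinarith
  -- power bounds
  have hbt := hbound t ⟨ht0, htT⟩
  have hhtpos : 0 < h t := lt_of_lt_of_le (div_pos hc hTt) hbt.1
  have hPinv : ∀ x : ℝ, 0 ≤ x → (x / h 0 * (T - t)⁻¹) ^ m = (x / h 0) ^ m * P := by
    intro x hx
    rw [Real.mul_rpow (by positivity) (by positivity), hPdef, Real.rpow_neg hTt.le,
      Real.inv_rpow hTt.le]
  have p1 : (c / h 0) ^ m * P ≤ (h t / h 0) ^ m := by
    rw [← hPinv c hc.le]
    apply Real.rpow_le_rpow (by positivity) _ hm.le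
    have : c / h 0 * (T - t)⁻¹ = c / (T - t) / h 0 := by ring
    rw [this]
    exact (div_le_div_iff_of_pos_right hA).2 hbt.1
  have p2 : (h t / h 0) ^ m ≤ ((c + c' * T) / h 0) ^ m * P := by
    rw [← hPinv (c + c' * T) (by nlinarith)]
    apply Real.rpow_le_rpow (by positivity) _ hm.le
    have h3 : h t ≤ (c + c' * T) / (T - t) := by
      have h4 : c / (T - t) + c' ≤ (c + c' * T) / (T - t) := by
        rw [div_add' _ _ _ hTt.ne', div_le_div_iff₀ hTt hTt]
        nlinarith
      linarith [hbt.2]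
    have : (c + c' * T) / h 0 * (T - t)⁻¹ = (c + c' * T) / (T - t) / h 0 := by ring
    rw [this]
    exact (div_le_div_iff_of_pos_right hA).2 h3
  -- combine
  have hPQ : P * Q = (T - t) ^ (β * (c - (m + 1))) := by
    rw [hPdef, hQdef, ← Real.rpow_add hTt]
    congr 1
    have : β * (c - (m + 1)) = β * c - m := by rw [mul_sub, hβm]
    rw [this]; ring
  rw [hw t]
  constructor
  · calc (c / h 0) ^ m * Real.exp (-(β * c' * T)) * T ^ (-(β * c)) *
        (T - t) ^ (β * (c - (m + 1)))
        = ((c / h 0) ^ m * P) * (Real.exp (-(β * c' * T)) * (Q * R)) := by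
          rw [← hPQ, ← hRdef]; ring
      _ ≤ (h t / h 0) ^ m * Real.exp (-β * I) :=
          mul_le_mul p1 e2 (by positivity) (by positivity)
  · calc (h t / h 0) ^ m * Real.exp (-β * I)
        ≤ (((c + c' * T) / h 0) ^ m * P) * (Q * R) :=
          mul_le_mul p2 e1 (by positivity) (by positivity)
      _ = ((c + c' * T) / h 0) ^ m * T ^ (-(β * c)) * (T - t) ^ (β * (c - (m + 1))) := by
          rw [← hPQ, ← hRdef]; ring
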